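/- arXiv:2310.06793 — 3 statements merged into one kernel-verified Lean document; each statement's English description precedes it below -/
import Mathlib

section
/- Let Y₁,…,Y_p be independent Poisson random variables with means tp₁,…,tp_p where Σp_i = 1, and let (Z₁,…,Z_p) ~ Multinomial(t, (p₁,…,p_p)) for an integer t ≥ 1. Then for any nonnegative function f: ℝ^p → ℝ₊, E[f(Z₁,…,Z_p)] ≤ e√t · E[f(Y₁,…,Y_p)]. -/
/-- The Poisson pmf with mean `λ`. -/
noncomputable def poissonPmf (lam : ℝ) (k : ℕ) : ℝ :=
  Real.exp (-lam) * lam ^ k / (Nat.factorial k)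

/-- The multinomial pmf with `t` trials and probabilities `q`. -/
noncomputable def multinomialPmf {p : ℕ} (t : ℕ) (q : Fin p → ℝ) (a : Fin p → ℕ) : ℝ :=
  (Nat.factorial t : ℝ) / (∏ i, (Nat.factorial (a i) : ℝ)) * ∏ i, q i ^ a i

lemma stirling_bound (t : ℕ) (ht : 1 ≤ t) :
    (Nat.factorial t : ℝ) * Real.exp t / (t : ℝ) ^ t ≤ Real.exp 1 * Real.sqrt t := by
  have h1 : Stirling.stirlingSeq t ≤ Stirling.stirlingSeq 1 := by
    obtain ⟨s, rfl⟩ := Nat.exists_eq_add_of_le ht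
    simpa [Nat.add_comm] using Stirling.stirlingSeq'_antitone (Nat.zero_le s)
  rw [Stirling.stirlingSeq_one] at h1
  have htpos : (0 : ℝ) < t := by exact_mod_cast ht
  have hden : (0 : ℝ) < Real.sqrt (2 * t) * ((t : ℝ) / Real.exp 1) ^ t := by positivity
  have h2 : (Nat.factorial t : ℝ) ≤
      Real.exp 1 / Real.sqrt 2 * (Real.sqrt (2 * t) * ((t : ℝ) / Real.exp 1) ^ t) := by
    rw [Stirling.stirlingSeq, div_le_iff₀ hden] at h1
    linarith
  have hsqrt : Real.sqrt (2 * t) = Real.sqrt 2 * Real.sqrt t := Real.sqrt_mul (by norm_num) _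
  have hs2 : (0:ℝ) < Real.sqrt 2 := by positivity
  have h3 : (Nat.factorial t : ℝ) ≤ Real.exp 1 * Real.sqrt t * ((t : ℝ) / Real.exp 1) ^ t := by
    calc (Nat.factorial t : ℝ) ≤ _ := h2
      _ = Real.exp 1 * Real.sqrt t * ((t : ℝ) / Real.exp 1) ^ t := by
          rw [hsqrt]; field_simp
  have hdiv : ((t : ℝ) / Real.exp 1) ^ t = (t : ℝ) ^ t / Real.exp 1 ^ t := div_pow _ _ _
  rw [div_le_iff₀ (by positivity : (0:ℝ) < (t:ℝ) ^ t)]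
  have hexp : Real.exp 1 ^ t = Real.exp t := by
    rw [← Real.exp_nat_mul]; norm_num
  calc (Nat.factorial t : ℝ) * Real.exp t
      ≤ (Real.exp 1 * Real.sqrt t * ((t : ℝ) ^ t / Real.exp 1 ^ t)) * Real.exp t := by
        rw [← hdiv]; exact mul_le_mul_of_nonneg_right h3 (Real.exp_pos _).le
    _ = Real.exp 1 * Real.sqrt t * (t : ℝ) ^ t := by
        rw [hexp]; field_simp

lemma prod_poisson_eq {p : ℕ} (t : ℕ) (q : Fin p → ℝ)
    (hsum : ∑ i, q i = 1) (a : Fin p → ℕ) (hat : ∑ i, a i = t) :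
    (∏ i, poissonPmf ((t : ℝ) * q i) (a i)) =
      Real.exp (-(t : ℝ)) * (t : ℝ) ^ t * (∏ i, q i ^ a i) /
        (∏ i, (Nat.factorial (a i) : ℝ)) := by
  unfold poissonPmf
  rw [Finset.prod_div_distrib, Finset.prod_mul_distrib]
  congr 1
  rw [← Real.exp_sum]
  have h1 : ∑ i, -((t : ℝ) * q i) = -(t : ℝ) := by
    rw [Finset.sum_neg_distrib, ← Finset.mul_sum, hsum, mul_one]
  rw [h1]
  have h2 : ∏ i, ((t : ℝ) * q i) ^ a i = (∏ i, (t : ℝ) ^ a i) * ∏ i, q i ^ a i := by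
    rw [← Finset.prod_mul_distrib]; exact Finset.prod_congr rfl fun i _ => mul_pow _ _ _
  rw [h2, Finset.prod_pow_eq_pow_sum, hat, mul_assoc]

/-- Let `Y₁,…,Y_p` be independent Poisson random variables with means `t q₁,…,t q_p`
(`∑ q_i = 1`), and `(Z₁,…,Z_p) ~ Multinomial(t, q)` for an integer `t ≥ 1`.  Then for any
nonnegative function `f : ℝ^p → ℝ₊`, `E[f(Z)] ≤ e √t E[f(Y)]`. -/
theorem multinomial_expectation_le_poisson {p : ℕ} (t : ℕ) (ht : 1 ≤ t)
    (q : Fin p → ℝ) (hq : ∀ i, 0 ≤ q i) (hsum : ∑ i, q i = 1)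
    (f : (Fin p → ℝ) → ℝ) (hf : ∀ x, 0 ≤ f x) :
    (∑' a : Fin p → ℕ,
        if ∑ i, a i = t then
          ENNReal.ofReal (multinomialPmf t q a * f (fun i => (a i : ℝ)))
        else 0) ≤
      ENNReal.ofReal (Real.exp 1 * Real.sqrt t) *
        ∑' a : Fin p → ℕ,
          ENNReal.ofReal ((∏ i, poissonPmf ((t : ℝ) * q i) (a i)) * f (fun i => (a i : ℝ))) := by
  rw [← ENNReal.tsum_mul_left]
  apply ENNReal.tsum_le_tsum
  intro a
  split_ifs with h
  · rw [← ENNReal.ofReal_mul (by positivity)]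
    apply ENNReal.ofReal_le_ofReal
    have hP := prod_poisson_eq t q hsum a h
    have hfac : (0:ℝ) < ∏ i, (Nat.factorial (a i) : ℝ) := by positivity
    have htpos : (0:ℝ) < t := by exact_mod_cast ht
    have hmul : multinomialPmf t q a =
        ((Nat.factorial t : ℝ) * Real.exp t / (t : ℝ) ^ t) *
          (∏ i, poissonPmf ((t : ℝ) * q i) (a i)) := by
      rw [hP]
      unfold multinomialPmf
      rw [Real.exp_neg]
      have hexp : Real.exp (t:ℝ) ≠ 0 := (Real.exp_pos _).ne'
      field_simp
    rw [hmul]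
    have hPnn : 0 ≤ ∏ i, poissonPmf ((t : ℝ) * q i) (a i) := by
      rw [hP]
      have : 0 ≤ ∏ i, q i ^ a i := Finset.prod_nonneg fun i _ => pow_nonneg (hq i) _
      positivity
    have hfnn := hf (fun i => (a i : ℝ))
    rw [mul_assoc]
    exact mul_le_mul_of_nonneg_right (stirling_bound t ht) (mul_nonneg hPnn hfnn)
  · exact zero_le
end

section
/- Let P and P̂ be row-stochastic n×n matrices (transition kernels) of an MDP with actions a ∈ 𝒜, reward function R with values in [0,1], and discount γ ∈ (0,1). For any stationary policy π, the corresponding Q-functions satisfy ‖Q^π_R − Q̂^π_R‖_∞ ≤ (γ/(1−γ)²)·max_{a∈𝒜} ‖P^a − P̂^a‖_{1→∞}. -/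
open Matrix

variable {n : ℕ} {A : Type*} [Fintype A] [Nonempty A]

/-- The transition matrix of the Markov chain induced by a stationary policy `π`. -/
noncomputable def policyMatrix (P : A → Matrix (Fin n) (Fin n) ℝ) (π : Fin n → A) :
    Matrix (Fin n) (Fin n) ℝ :=
  fun x y => P (π x) x y

/-- The value function of a stationary policy `π` in the discounted MDP with kernels `P`,
reward `R` and discount `γ`: `V^π = ∑_{t≥0} γ^t P_π^t r_π`. -/
noncomputable def valueFun (P : A → Matrix (Fin n) (Fin n) ℝ) (R : Fin n → A → ℝ)
    (γ : ℝ) (π : Fin n → A) : Fin n → ℝ :=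
  fun x => ∑' t : ℕ, γ ^ t * ((policyMatrix P π ^ t).mulVec (fun s => R s (π s)) x)

/-- The state-action value function of `π`:
`Q^π(x,a) = R(x,a) + γ E_{x' ∼ P^a(x,·)}[V^π(x')]`. -/
noncomputable def qFun (P : A → Matrix (Fin n) (Fin n) ℝ) (R : Fin n → A → ℝ)
    (γ : ℝ) (π : Fin n → A) : Fin n → A → ℝ :=
  fun x a => R x a + γ * ∑ y, P a x y * valueFun P R γ π y

lemma stoch_pow (M : Matrix (Fin n) (Fin n) ℝ)
    (h : ∀ x, (∀ y, 0 ≤ M x y) ∧ ∑ y, M x y = 1) (t : ℕ) :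
    ∀ x, (∀ y, 0 ≤ (M ^ t) x y) ∧ ∑ y, (M ^ t) x y = 1 := by
  induction t with
  | zero =>
    intro x
    constructor
    · intro y; simp [Matrix.one_apply]; positivity
    · simp [Matrix.one_apply]
  | succ t ih =>
    intro x
    rw [pow_succ]
    constructor
    · intro y
      rw [Matrix.mul_apply]
      exact Finset.sum_nonneg fun k _ => mul_nonneg ((ih x).1 k) ((h k).1 y)
    · simp only [Matrix.mul_apply]
      rw [Finset.sum_comm]
      calc ∑ k, ∑ y, (M ^ t) x k * M k y
          = ∑ k, (M ^ t) x k * ∑ y, M k y := by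
            simp [Finset.mul_sum]
        _ = 1 := by simp [fun k => (h k).2, (ih x).2]

lemma mulVec_mem_Icc (M : Matrix (Fin n) (Fin n) ℝ) (x : Fin n)
    (h0 : ∀ y, 0 ≤ M x y) (h1 : ∑ y, M x y = 1)
    (r : Fin n → ℝ) (hr : ∀ y, r y ∈ Set.Icc (0:ℝ) 1) :
    M.mulVec r x ∈ Set.Icc (0:ℝ) 1 := by
  rw [Matrix.mulVec, dotProduct]
  constructor
  · exact Finset.sum_nonneg fun y _ => mul_nonneg (h0 y) (hr y).1
  · calc ∑ y, M x y * r y ≤ ∑ y, M x y * 1 :=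
          Finset.sum_le_sum fun y _ => mul_le_mul_of_nonneg_left (hr y).2 (h0 y)
      _ = 1 := by simpa using h1

lemma summable_term (M : Matrix (Fin n) (Fin n) ℝ)
    (h : ∀ x, (∀ y, 0 ≤ M x y) ∧ ∑ y, M x y = 1)
    (r : Fin n → ℝ) (hr : ∀ y, r y ∈ Set.Icc (0:ℝ) 1)
    {γ : ℝ} (hγ : γ ∈ Set.Ioo (0:ℝ) 1) (x : Fin n) :
    Summable (fun t : ℕ => γ ^ t * ((M ^ t).mulVec r x)) := by
  apply Summable.of_norm_bounded (g := fun t : ℕ => γ ^ t)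
    (summable_geometric_of_lt_one hγ.1.le hγ.2)
  intro t
  have hm := mulVec_mem_Icc (M ^ t) x (stoch_pow M h t x).1 (stoch_pow M h t x).2 r hr
  rw [Real.norm_eq_abs, abs_mul, abs_pow, abs_of_pos hγ.1]
  have habs : |(M ^ t).mulVec r x| ≤ 1 := abs_le.mpr ⟨by linarith [hm.1], hm.2⟩
  calc γ ^ t * |(M ^ t).mulVec r x| ≤ γ ^ t * 1 :=
        mul_le_mul_of_nonneg_left habs (pow_nonneg hγ.1.le t)
    _ = γ ^ t := mul_one _

lemma vAux_mem (M : Matrix (Fin n) (Fin n) ℝ)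
    (h : ∀ x, (∀ y, 0 ≤ M x y) ∧ ∑ y, M x y = 1)
    (r : Fin n → ℝ) (hr : ∀ y, r y ∈ Set.Icc (0:ℝ) 1)
    {γ : ℝ} (hγ : γ ∈ Set.Ioo (0:ℝ) 1) (x : Fin n) :
    (∑' t : ℕ, γ ^ t * ((M ^ t).mulVec r x)) ∈ Set.Icc (0:ℝ) ((1 - γ)⁻¹) := by
  have hs := summable_term M h r hr hγ x
  constructor
  · apply tsum_nonneg
    intro t
    exact mul_nonneg (pow_nonneg hγ.1.le t)
      (mulVec_mem_Icc (M ^ t) x (stoch_pow M h t x).1 (stoch_pow M h t x).2 r hr).1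
  · have := tsum_geometric_of_lt_one hγ.1.le hγ.2
    rw [← this]
    apply Summable.tsum_le_tsum _ hs (summable_geometric_of_lt_one hγ.1.le hγ.2)
    intro t
    have hm := mulVec_mem_Icc (M ^ t) x (stoch_pow M h t x).1 (stoch_pow M h t x).2 r hr
    calc γ ^ t * (M ^ t).mulVec r x ≤ γ ^ t * 1 :=
          mul_le_mul_of_nonneg_left hm.2 (pow_nonneg hγ.1.le t)
      _ = γ ^ t := mul_one _

lemma vAux_bellman (M : Matrix (Fin n) (Fin n) ℝ)
    (h : ∀ x, (∀ y, 0 ≤ M x y) ∧ ∑ y, M x y = 1)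
    (r : Fin n → ℝ) (hr : ∀ y, r y ∈ Set.Icc (0:ℝ) 1)
    {γ : ℝ} (hγ : γ ∈ Set.Ioo (0:ℝ) 1) (x : Fin n) :
    (∑' t : ℕ, γ ^ t * ((M ^ t).mulVec r x))
      = r x + γ * ∑ y, M x y * (∑' t : ℕ, γ ^ t * ((M ^ t).mulVec r y)) := by
  have hs := summable_term M h r hr hγ
  rw [Summable.tsum_eq_zero_add (hs x)]
  congr 1
  · simp [Matrix.one_mulVec]
  have key : ∀ t : ℕ, γ ^ (t + 1) * ((M ^ (t + 1)).mulVec r x)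
      = ∑ y, (γ * M x y) * (γ ^ t * ((M ^ t).mulVec r y)) := by
    intro t
    have hmm : (M ^ (t + 1)) = M * M ^ t := pow_succ' M t
    rw [hmm, ← Matrix.mulVec_mulVec]
    simp only [Matrix.mulVec, dotProduct]
    rw [Finset.mul_sum]
    apply Finset.sum_congr rfl
    intro y _
    ring
  simp only [key]
  rw [Summable.tsum_finsetSum (fun y _ => (hs y).mul_left _)]
  rw [Finset.mul_sum]
  apply Finset.sum_congr rfl
  intro y _
  rw [tsum_mul_left]
  ring


/-- If `{P^a}` and `{P̂^a}` are row-stochastic kernels, rewards lie in `[0,1]` and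
`γ ∈ (0,1)`, then for any stationary policy `π`,
`‖Q^π_R − Q̂^π_R‖_∞ ≤ (γ/(1−γ)²) max_a ‖P^a − P̂^a‖_{1→∞}`. -/
theorem qFun_diff_le_kernel_diff
    (P Phat : A → Matrix (Fin n) (Fin n) ℝ)
    (hP : ∀ a x, (∀ y, 0 ≤ P a x y) ∧ ∑ y, P a x y = 1)
    (hPhat : ∀ a x, (∀ y, 0 ≤ Phat a x y) ∧ ∑ y, Phat a x y = 1)
    (R : Fin n → A → ℝ) (hR : ∀ x a, R x a ∈ Set.Icc (0 : ℝ) 1)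
    (γ : ℝ) (hγ : γ ∈ Set.Ioo (0 : ℝ) 1)
    (π : Fin n → A) :
    (⨆ x, ⨆ a, |qFun P R γ π x a - qFun Phat R γ π x a|) ≤
      γ / (1 - γ) ^ 2 * ⨆ a, ⨆ x, ∑ y, |P a x y - Phat a x y| := by
  obtain ⟨hγ0, hγ1⟩ := hγ
  have h1γ : 0 < 1 - γ := by linarith
  rcases Nat.eq_zero_or_pos n with hn | hn
  · subst hn
    haveI : IsEmpty (Fin 0) := inferInstance
    simp [Real.iSup_of_isEmpty, ciSup_const]
  haveI : Nonempty (Fin n) := ⟨⟨0, hn⟩⟩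
  set ε := ⨆ a, ⨆ x, ∑ y, |P a x y - Phat a x y| with hεdef
  have hεle : ∀ a x, ∑ y, |P a x y - Phat a x y| ≤ ε := by
    intro a x
    refine le_trans (le_ciSup (f := fun x => ∑ y, |P a x y - Phat a x y|)
      (Set.Finite.bddAbove (Set.finite_range _)) x) ?_
    exact le_ciSup (f := fun a => ⨆ x, ∑ y, |P a x y - Phat a x y|)
      (Set.Finite.bddAbove (Set.finite_range _)) a
  have hε0 : 0 ≤ ε := by
    refine le_trans ?_ (hεle (Classical.arbitrary A) ⟨0, hn⟩)
    exact Finset.sum_nonneg fun y _ => abs_nonneg _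
  set M := policyMatrix P π with hMdef
  set Mh := policyMatrix Phat π with hMhdef
  set r : Fin n → ℝ := fun s => R s (π s) with hrdef
  have hM : ∀ x, (∀ y, 0 ≤ M x y) ∧ ∑ y, M x y = 1 := fun x => hP (π x) x
  have hMh : ∀ x, (∀ y, 0 ≤ Mh x y) ∧ ∑ y, Mh x y = 1 := fun x => hPhat (π x) x
  have hrI : ∀ y, r y ∈ Set.Icc (0:ℝ) 1 := fun y => hR y (π y)
  set V := valueFun P R γ π with hVdef
  set Vh := valueFun Phat R γ π with hVhdef
  have hVmem : ∀ x, V x ∈ Set.Icc (0:ℝ) ((1-γ)⁻¹) :=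
    fun x => vAux_mem M hM r hrI ⟨hγ0, hγ1⟩ x
  have hBel : ∀ x, V x = r x + γ * ∑ y, M x y * V y :=
    fun x => vAux_bellman M hM r hrI ⟨hγ0, hγ1⟩ x
  have hBelh : ∀ x, Vh x = r x + γ * ∑ y, Mh x y * Vh y :=
    fun x => vAux_bellman Mh hMh r hrI ⟨hγ0, hγ1⟩ x
  have hVabs : ∀ x, |V x| ≤ (1-γ)⁻¹ :=
    fun x => abs_le.mpr ⟨by linarith [(hVmem x).1, inv_nonneg.mpr h1γ.le], (hVmem x).2⟩
  -- generic split bound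
  have hsplit : ∀ (B Bh v vh : Fin n → ℝ),
      ∑ y, B y * v y - ∑ y, Bh y * vh y
        = ∑ y, ((B y - Bh y) * v y + Bh y * (v y - vh y)) := by
    intro B Bh v vh
    rw [← Finset.sum_sub_distrib]
    exact Finset.sum_congr rfl fun y _ => by ring
  set D : Fin n → ℝ := fun x => V x - Vh x with hDdef
  obtain ⟨x₀, -, hx₀⟩ := Finset.exists_max_image (Finset.univ : Finset (Fin n))
    (fun x => |D x|) ⟨⟨0, hn⟩, Finset.mem_univ _⟩
  -- bound for a generic row with stochastic hat-row
  have hrow : ∀ (B Bh : Fin n → ℝ), (∀ y, 0 ≤ Bh y) → (∑ y, Bh y = 1) →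
      (∑ y, |B y - Bh y|) ≤ ε →
      |∑ y, ((B y - Bh y) * V y + Bh y * D y)| ≤ ε * (1-γ)⁻¹ + |D x₀| := by
    intro B Bh hBh0 hBh1 hBε
    calc |∑ y, ((B y - Bh y) * V y + Bh y * D y)|
        ≤ ∑ y, |(B y - Bh y) * V y + Bh y * D y| := Finset.abs_sum_le_sum_abs _ _
      _ ≤ ∑ y, (|B y - Bh y| * (1-γ)⁻¹ + Bh y * |D x₀|) := by
          apply Finset.sum_le_sum
          intro y _
          calc |(B y - Bh y) * V y + Bh y * D y|
              ≤ |(B y - Bh y) * V y| + |Bh y * D y| := abs_add_le _ _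
            _ ≤ |B y - Bh y| * (1-γ)⁻¹ + Bh y * |D x₀| := by
                rw [abs_mul, abs_mul, abs_of_nonneg (hBh0 y)]
                exact add_le_add
                  (mul_le_mul_of_nonneg_left (hVabs y) (abs_nonneg _))
                  (mul_le_mul_of_nonneg_left (hx₀ y (Finset.mem_univ _)) (hBh0 y))
      _ = (∑ y, |B y - Bh y|) * (1-γ)⁻¹ + (∑ y, Bh y) * |D x₀| := by
          rw [Finset.sum_add_distrib, ← Finset.sum_mul, ← Finset.sum_mul]
      _ ≤ ε * (1-γ)⁻¹ + |D x₀| := by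
          rw [hBh1, one_mul]
          exact add_le_add_left (mul_le_mul_of_nonneg_right hBε (inv_nonneg.mpr h1γ.le)) _
  have hMε : ∀ x, ∑ y, |M x y - Mh x y| ≤ ε := fun x => hεle (π x) x
  have hDkey : |D x₀| ≤ γ * (ε * (1-γ)⁻¹ + |D x₀|) := by
    have hd : D x₀ = γ * ∑ y, ((M x₀ y - Mh x₀ y) * V y + Mh x₀ y * D y) := by
      rw [hDdef]
      simp only
      rw [hBel x₀, hBelh x₀, ← hsplit]
      ring
    calc |D x₀| = γ * |∑ y, ((M x₀ y - Mh x₀ y) * V y + Mh x₀ y * D y)| := by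
          rw [hd, abs_mul, abs_of_pos hγ0]
      _ ≤ γ * (ε * (1-γ)⁻¹ + |D x₀|) := mul_le_mul_of_nonneg_left
          (hrow (M x₀) (Mh x₀) (hMh x₀).1 (hMh x₀).2 (hMε x₀)) hγ0.le
  have hD : ∀ x, |D x| ≤ γ * ε / (1-γ)^2 := by
    intro x
    refine le_trans (hx₀ x (Finset.mem_univ _)) ?_
    have h2 : (1-γ) * |D x₀| ≤ γ * ε * (1-γ)⁻¹ := by nlinarith [hDkey]
    rw [le_div_iff₀ (by positivity : (0:ℝ) < (1-γ)^2)]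
    have h4 := mul_le_mul_of_nonneg_right h2 h1γ.le
    have h5 : γ * ε * (1-γ)⁻¹ * (1-γ) = γ * ε := by field_simp
    calc |D x₀| * (1-γ)^2 = (1-γ) * |D x₀| * (1-γ) := by ring
      _ ≤ γ * ε * (1-γ)⁻¹ * (1-γ) := h4
      _ = γ * ε := h5
  -- final pointwise bound on Q difference
  have hQ : ∀ x a, |qFun P R γ π x a - qFun Phat R γ π x a| ≤ γ / (1-γ)^2 * ε := by
    intro x a
    have hq : qFun P R γ π x a - qFun Phat R γ π x a
        = γ * ∑ y, ((P a x y - Phat a x y) * V y + Phat a x y * D y) := by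
      simp only [qFun, ← hVdef, ← hVhdef]
      rw [hDdef]
      simp only
      rw [← hsplit]
      ring
    rw [hq, abs_mul, abs_of_pos hγ0]
    have h1 := hrow (fun y => P a x y) (fun y => Phat a x y)
      (hPhat a x).1 (hPhat a x).2 (hεle a x)
    calc γ * |∑ y, ((P a x y - Phat a x y) * V y + Phat a x y * D y)|
        ≤ γ * (ε * (1-γ)⁻¹ + |D x₀|) := mul_le_mul_of_nonneg_left h1 hγ0.le
      _ ≤ γ * (ε * (1-γ)⁻¹ + γ * ε / (1-γ)^2) := by
          have := hD x₀
          nlinarith [hD x₀]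
      _ = γ / (1-γ)^2 * ε := by field_simp; ring
  refine ciSup_le fun x => ciSup_le fun a => hQ x a
end

section
/- Let M ∈ ℝ^{n×n} have nonnegative entries with every row sum positive, let P be its row-normalization P_{i,:} = M_{i,:}/‖M_{i,:}‖₁, and let M̂ ∈ ℝ^{n×n} with row-normalization P̂_{i,:} = (M̂_{i,:})₊/‖(M̂_{i,:})₊‖₁ whenever ‖(M̂_{i,:})₊‖₁ > 0 (and uniform otherwise). If ‖(M̂_{i,:})₊‖₁ > 0 for all i, then ‖P̂ − P‖_{1→∞} ≤ 2√n·‖M̂ − M‖_{2→∞} / min_j ‖M_{j,:}‖₁. -/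
/-- `‖A‖_{1→∞}`: the maximum ℓ1-norm of the rows of `A`. -/
noncomputable def norm1toInf {n m : ℕ} (A : Matrix (Fin n) (Fin m) ℝ) : ℝ :=
  ⨆ i, ∑ j, |A i j|

/-- `‖A‖_{2→∞}`: the maximum ℓ2-norm of the rows of `A`. -/
noncomputable def norm2toInf {n m : ℕ} (A : Matrix (Fin n) (Fin m) ℝ) : ℝ :=
  ⨆ i, Real.sqrt (∑ j, (A i j) ^ 2)

/-- Let `M` be entrywise nonnegative with positive row sums, `P` its row ℓ1-normalization,
and `P̂` the row ℓ1-normalization of the positive part of `M̂` (assumed to have positive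
row ℓ1-norms).  Then `‖P̂ − P‖_{1→∞} ≤ 2 √n ‖M̂ − M‖_{2→∞} / min_j ‖M_{j,:}‖₁`. -/
theorem row_normalization_error {n : ℕ} (hn : 0 < n)
    (M Mhat : Matrix (Fin n) (Fin n) ℝ)
    (hMnonneg : ∀ i j, 0 ≤ M i j)
    (hMrow : ∀ i, 0 < ∑ j, |M i j|)
    (hMhatrow : ∀ i, 0 < ∑ j, max 0 (Mhat i j))
    (P Phat : Matrix (Fin n) (Fin n) ℝ)
    (hP : ∀ i j, P i j = M i j / ∑ k, |M i k|)
    (hPhat : ∀ i j, Phat i j = max 0 (Mhat i j) / ∑ k, |max 0 (Mhat i k)|) :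
    norm1toInf (Phat - P) ≤
      2 * Real.sqrt n * norm2toInf (Mhat - M) / ⨅ j, ∑ k, |M j k| := by
  haveI : Nonempty (Fin n) := ⟨⟨0, hn⟩⟩
  set m := ⨅ j, ∑ k, |M j k| with hm
  obtain ⟨j0, hj0⟩ := Finite.exists_min fun j => ∑ k, |M j k|
  have hmpos : 0 < m := lt_of_lt_of_le (hMrow j0) (le_ciInf hj0)
  have hmle : ∀ i, m ≤ ∑ k, |M i k| := fun i => ciInf_le (Finite.bddBelow_range _) i
  have hN2 : ∀ i, Real.sqrt (∑ j, ((Mhat - M) i j) ^ 2) ≤ norm2toInf (Mhat - M) := by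
    intro i
    rw [norm2toInf]
    exact le_ciSup (f := fun i => Real.sqrt (∑ j, ((Mhat - M) i j) ^ 2))
      (Finite.bddAbove_range _) i
  have hN2nonneg : 0 ≤ norm2toInf (Mhat - M) := by
    have j : Fin n := ⟨0, hn⟩
    exact le_trans (Real.sqrt_nonneg _) (hN2 j)
  rw [norm1toInf]
  apply ciSup_le
  intro i
  set sa := ∑ k, |max 0 (Mhat i k)| with hsa
  set sb := ∑ k, |M i k| with hsb
  have hsa_eq : sa = ∑ k, max 0 (Mhat i k) :=
    Finset.sum_congr rfl fun k _ => abs_of_nonneg (le_max_left _ _)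
  have hsapos : 0 < sa := hsa_eq ▸ hMhatrow i
  have hsbpos : 0 < sb := hMrow i
  set d := ∑ k, |max 0 (Mhat i k) - M i k| with hd
  have hdnonneg : 0 ≤ d := Finset.sum_nonneg fun k _ => abs_nonneg _
  have hsasb : |sa - sb| ≤ d := by
    have heq : sa - sb = ∑ k, (|max 0 (Mhat i k)| - |M i k|) := by
      rw [hsa, hsb, ← Finset.sum_sub_distrib]
    rw [heq]
    calc |∑ k, (|max 0 (Mhat i k)| - |M i k|)| ≤ ∑ k, |(|max 0 (Mhat i k)| - |M i k|)| :=
          Finset.abs_sum_le_sum_abs _ _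
      _ ≤ d := Finset.sum_le_sum fun k _ => abs_abs_sub_abs_le_abs_sub _ _
  have hkey : ∑ j, |(Phat - P) i j| ≤ 2 * d / sb := by
    have hstep : ∀ j, |(Phat - P) i j| ≤
        |max 0 (Mhat i j)| * |sb - sa| / (sa * sb) + |max 0 (Mhat i j) - M i j| / sb := by
      intro j
      have h0 : (Phat - P) i j = max 0 (Mhat i j) / sa - M i j / sb := by
        simp [Matrix.sub_apply, hPhat i j, hP i j, hsa, hsb]
      rw [h0]
      have hexp : max 0 (Mhat i j) / sa - M i j / sb
          = max 0 (Mhat i j) * (sb - sa) / (sa * sb) + (max 0 (Mhat i j) - M i j) / sb := by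
        field_simp
        ring
      rw [hexp]
      calc |max 0 (Mhat i j) * (sb - sa) / (sa * sb) + (max 0 (Mhat i j) - M i j) / sb|
          ≤ |max 0 (Mhat i j) * (sb - sa) / (sa * sb)| + |(max 0 (Mhat i j) - M i j) / sb| :=
            abs_add_le _ _
        _ = |max 0 (Mhat i j)| * |sb - sa| / (sa * sb) + |max 0 (Mhat i j) - M i j| / sb := by
            rw [abs_div, abs_mul, abs_div, abs_of_pos (mul_pos hsapos hsbpos),
              abs_of_pos hsbpos]
    calc ∑ j, |(Phat - P) i j|
        ≤ ∑ j, (|max 0 (Mhat i j)| * |sb - sa| / (sa * sb) + |max 0 (Mhat i j) - M i j| / sb) :=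
          Finset.sum_le_sum fun j _ => hstep j
      _ = sa * |sb - sa| / (sa * sb) + d / sb := by
          rw [Finset.sum_add_distrib, ← Finset.sum_div, ← Finset.sum_div,
            ← Finset.sum_mul, ← hsa, ← hd]
      _ = |sb - sa| / sb + d / sb := by
          have h1 : sa ≠ 0 := ne_of_gt hsapos
          have h2 : sb ≠ 0 := ne_of_gt hsbpos
          field_simp
      _ ≤ d / sb + d / sb := by
          gcongr
          rw [abs_sub_comm]; exact hsasb
      _ = 2 * d / sb := by ring
  have hproj : ∀ k, |max 0 (Mhat i k) - M i k| ≤ |(Mhat - M) i k| := by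
    intro k
    have hMk : max 0 (M i k) = M i k := max_eq_right (hMnonneg i k)
    rw [Matrix.sub_apply]
    calc |max 0 (Mhat i k) - M i k| = |max 0 (Mhat i k) - max 0 (M i k)| := by rw [hMk]
      _ ≤ |Mhat i k - M i k| := by
          rw [max_comm (0 : ℝ) (Mhat i k), max_comm (0 : ℝ) (M i k)]
          exact abs_max_sub_max_le_abs _ _ _
  have hCS : ∑ k, |(Mhat - M) i k| ≤ Real.sqrt n * Real.sqrt (∑ k, ((Mhat - M) i k) ^ 2) := by
    rw [← Real.sqrt_mul (Nat.cast_nonneg n)]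
    apply Real.le_sqrt_of_sq_le
    have h1 := sq_sum_le_card_mul_sum_sq (s := Finset.univ) (f := fun k => |(Mhat - M) i k|)
    simpa [sq_abs] using h1
  have hdbound : d ≤ Real.sqrt n * norm2toInf (Mhat - M) := by
    calc d ≤ ∑ k, |(Mhat - M) i k| := Finset.sum_le_sum fun k _ => hproj k
      _ ≤ Real.sqrt n * Real.sqrt (∑ k, ((Mhat - M) i k) ^ 2) := hCS
      _ ≤ Real.sqrt n * norm2toInf (Mhat - M) := by
          gcongr
          exact hN2 i
  calc ∑ j, |(Phat - P) i j| ≤ 2 * d / sb := hkey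
    _ ≤ 2 * (Real.sqrt n * norm2toInf (Mhat - M)) / sb := by gcongr
    _ ≤ 2 * (Real.sqrt n * norm2toInf (Mhat - M)) / m :=
        div_le_div_of_nonneg_left (by positivity) hmpos (hmle i)
    _ = 2 * Real.sqrt n * norm2toInf (Mhat - M) / m := by ring
end
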